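/- Let q be a primitive l-th root of unity with l > 2 and l not twice an odd integer, so l' = L is even, where L is the smallest even multiple of l. Then in U_q(osp(1|2)) the following relation holds in the centre: (-1)^{L/2} Q_{L/2}(C) = -k^L - k^{-L} + η^L f^L e^L, where C = S^2 + 2 and Q_m is defined by Q_0 = 2, Q_1 = X, Q_{m+1} = X Q_m - Q_{m-1}. -/

import Mathlib

/-- `Q₀ = 2`, `Q₁ = X`, `Q_{m+1} = X Q_m - Q_{m-1}`. -/
noncomputable def Qcheb : ℕ → Polynomial ℤ
  | 0 => 2
  | 1 => Polynomial.X
  | (m + 2) => Polynomial.X * Qcheb (m + 1) - Qcheb m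

lemma cheb_eval {B : Type*} [CommRing B] (z y : B) (h : z * y = 1) :
    ∀ m : ℕ, Polynomial.aeval (z + y) (Qcheb m) = z ^ m + y ^ m
  | 0 => by norm_num [Qcheb]; exact map_ofNat _ 2
  | 1 => by simp [Qcheb]
  | (m + 2) => by
      have h1 := cheb_eval z y h (m + 1)
      have h0 := cheb_eval z y h m
      simp only [Qcheb, map_sub, map_mul, Polynomial.aeval_X, h1, h0]
      have : z * y ^ (m+1) = y ^ m := by rw [pow_succ']; rw [← mul_assoc, h, one_mul]
      have : y * z ^ (m+1) = z ^ m := by rw [pow_succ']; rw [← mul_assoc, mul_comm y z, h, one_mul]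
      ring_nf
      linear_combination (z^m + y^m) * h

lemma prod_roots {M : ℕ} (hM : 0 < M) {w α σ : ℂ} (hw : IsPrimitiveRoot w M)
    (hσ : α ^ M = σ) :
    ∏ i ∈ Finset.range M, (Polynomial.X - Polynomial.C (w ^ i * α)) =
      Polynomial.X ^ M - Polynomial.C σ :=
  (X_pow_sub_C_eq_prod hw hM hσ).symm

lemma point_eval {B : Type*} [CommRing B] [Algebra ℂ B]
    {q : ℂ} (hq : q ≠ 0) {M : ℕ} (hM : 0 < M)
    (hw : IsPrimitiveRoot (q ^ 2) M) (hσ : q ^ M = (-1 : ℂ) ^ (M + 1))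
    (K K' z z' : B) (hK : K * K' = 1) (hz : z * z' = 1) :
    ∏ j ∈ Finset.range M, (algebraMap ℂ B (q * (q ^ 2) ^ j) * K
        + algebraMap ℂ B (q⁻¹ * (q⁻¹ ^ 2) ^ j) * K' - (z + z'))
      = K ^ M + K' ^ M + (-1 : B) ^ M * (z ^ M + z' ^ M) := by
  set aB := algebraMap ℂ B with haB
  set σ : ℂ := (-1 : ℂ) ^ (M + 1) with hσdef
  -- step A : factor each term
  have stepA : ∀ j ∈ Finset.range M,
      aB (q * (q ^ 2) ^ j) * K + aB (q⁻¹ * (q⁻¹ ^ 2) ^ j) * K' - (z + z')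
        = (-z') * ((z - aB (q * (q ^ 2) ^ j) * K) * (z - aB (q⁻¹ * (q⁻¹ ^ 2) ^ j) * K')) := by
    intro j _
    have hab : (q * (q ^ 2) ^ j) * (q⁻¹ * (q⁻¹ ^ 2) ^ j) = 1 := by
      field_simp
      rw [← mul_pow, one_div, mul_inv_cancel₀ (pow_ne_zero 2 hq), one_pow]
    have huv : (aB (q * (q ^ 2) ^ j) * K) * (aB (q⁻¹ * (q⁻¹ ^ 2) ^ j) * K') = 1 := by
      rw [mul_mul_mul_comm, ← map_mul, hab, map_one, one_mul, hK]
    linear_combination (z - aB (q * (q ^ 2) ^ j) * K - aB (q⁻¹ * (q⁻¹ ^ 2) ^ j) * K') * hz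
      + z' * huv
  rw [Finset.prod_congr rfl stepA, Finset.prod_mul_distrib, Finset.prod_mul_distrib,
    Finset.prod_const]
  -- step C : first product
  have prodK : ∀ (KK KK' : B) (α : ℂ), KK * KK' = 1 → IsPrimitiveRoot (α ^ 2) M →
      α ^ M = σ →
      ∏ j ∈ Finset.range M, (z - aB (α * (α ^ 2) ^ j) * KK) = z ^ M - aB σ * KK ^ M := by
    intro KK KK' α hKK hwα hσα
    have h1 : ∀ j ∈ Finset.range M, z - aB (α * (α ^ 2) ^ j) * KK
        = KK * (z * KK' - aB ((α ^ 2) ^ j * α)) := by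
      intro j _
      rw [mul_comm ((α ^ 2) ^ j) α]
      linear_combination (-z) * hKK
    rw [Finset.prod_congr rfl h1, Finset.prod_mul_distrib, Finset.prod_const,
      Finset.card_range]
    have h2 : ∏ j ∈ Finset.range M, (z * KK' - aB ((α ^ 2) ^ j * α))
        = (z * KK') ^ M - aB σ := by
      have h3 := congrArg (Polynomial.aeval (z * KK')) (prod_roots hM hwα hσα)
      simpa [map_prod, Polynomial.aeval_C, haB] using h3
    rw [h2]
    have h4 : KK ^ M * KK' ^ M = 1 := by rw [← mul_pow, hKK, one_pow]
    rw [mul_pow]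
    linear_combination z ^ M * h4
  have hC := prodK K K' q hK hw hσ
  have hq2 : IsPrimitiveRoot (q⁻¹ ^ 2) M := by
    have := hw.inv
    rwa [← inv_pow] at this
  have hσ' : q⁻¹ ^ M = σ := by
    have hinv : ((-1 : ℂ))⁻¹ = -1 := by norm_num
    rw [inv_pow, hσ, hσdef, ← inv_pow, hinv]
  have hD := prodK K' K q⁻¹ (by rw [mul_comm]; exact hK) hq2 hσ'
  rw [hC, hD]
  -- step E : final expansion
  have hzM : z ^ M * z' ^ M = 1 := by rw [← mul_pow, hz, one_pow]
  have hKM : K ^ M * K' ^ M = 1 := by rw [← mul_pow, hK, one_pow]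
  have hs2 : aB σ * aB σ = 1 := by
    rw [← map_mul, hσdef, ← pow_add, ← two_mul]
    norm_num [pow_mul]
  have hsgn : (-1 : B) ^ M * aB σ = -1 := by
    have : aB σ = (-1 : B) ^ (M + 1) := by rw [hσdef, map_pow, map_neg, map_one]
    rw [this, ← pow_add]
    have : Odd (M + (M + 1)) := ⟨M, by ring⟩
    exact this.neg_one_pow
  have hnegpow : (-z') ^ M = (-1 : B) ^ M * z' ^ M := by rw [neg_pow]
  rw [Finset.card_range, hnegpow]
  linear_combination ((-1:B) ^ M * z ^ M - (-1:B) ^ M * aB σ * (K ^ M + K' ^ M)) * hzM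
    + ((-1:B) ^ M * aB σ * aB σ * z' ^ M) * hKM + ((-1:B) ^ M * z' ^ M) * hs2
    + (-(K ^ M + K' ^ M)) * hsgn

open LaurentPolynomial in
lemma key_identity (q : ℂ) (hq : q ≠ 0) (M : ℕ) (hM : 0 < M)
    (hw : IsPrimitiveRoot (q ^ 2) M) (hσ : q ^ M = (-1 : ℂ) ^ (M + 1)) :
    ∏ j ∈ Finset.range M,
      (Polynomial.C (algebraMap ℂ (LaurentPolynomial ℂ) (q * (q ^ 2) ^ j) * (T 1) ^ 2
          + algebraMap ℂ (LaurentPolynomial ℂ) (q⁻¹ * (q⁻¹ ^ 2) ^ j) * (T (-1)) ^ 2)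
        - Polynomial.X)
      = Polynomial.C ((T 1 : LaurentPolynomial ℂ) ^ (2 * M) + (T (-1)) ^ (2 * M))
        + (-1 : Polynomial (LaurentPolynomial ℂ)) ^ M
          * (Qcheb M).map (Int.castRingHom (LaurentPolynomial ℂ)) := by
  haveI : IsDomain (LaurentPolynomial ℂ) := NoZeroDivisors.to_isDomain _
  set B := LaurentPolynomial ℂ
  set t : B := T 1 with htdef
  set t' : B := T (-1) with ht'def
  have ht : t * t' = 1 := by rw [htdef, ht'def, ← T_add]; norm_num
  rw [← sub_eq_zero]
  set D : Polynomial B := _ - _ with hD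
  apply Polynomial.eq_zero_of_infinite_isRoot
  apply Set.infinite_of_injective_forall_mem
    (f := fun n : ℕ => t ^ (n + 1) + t' ^ (n + 1))
  · -- injectivity
    intro n m h
    set u2 : ℂˣ := Units.mk0 2 two_ne_zero with hu2
    set g := (AddMonoidAlgebra.lift ℂ ℂ ℤ) ((Units.coeHom ℂ).comp ((zpowersHom ℂˣ) u2))
      with hg
    have hgt : g t = 2 := by
      rw [htdef]
      show g (AddMonoidAlgebra.single (1 : ℤ) (1 : ℂ)) = 2
      rw [hg, AddMonoidAlgebra.lift_single]
      simp [hu2]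
    have hgt' : g t' = 2⁻¹ := by
      rw [ht'def]
      show g (AddMonoidAlgebra.single (-1 : ℤ) (1 : ℂ)) = 2⁻¹
      rw [hg, AddMonoidAlgebra.lift_single]
      simp [hu2]
    have h2 := congrArg g h
    simp only [map_add, map_pow, hgt, hgt'] at h2
    have h3 : ((2 : ℝ) ^ (n+1) + (2⁻¹ : ℝ) ^ (n+1) : ℂ)
        = ((2 : ℝ) ^ (m+1) + (2⁻¹ : ℝ) ^ (m+1) : ℂ) := by push_cast; exact_mod_cast h2
    have h4 : (2 : ℝ) ^ (n+1) + (2⁻¹ : ℝ) ^ (n+1) = (2 : ℝ) ^ (m+1) + (2⁻¹ : ℝ) ^ (m+1) :=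
      by exact_mod_cast h3
    have hmono : StrictMono (fun n : ℕ => (2 : ℝ) ^ (n+1) + (2⁻¹ : ℝ) ^ (n+1)) := by
      intro a b hab
      simp only
      have h5 : (2 : ℝ) ^ (a + 2) ≤ 2 ^ (b + 1) :=
        pow_le_pow_right₀ (by norm_num) (by omega)
      have h6 : (2⁻¹ : ℝ) ^ (a + 1) ≤ 2⁻¹ := by
        apply pow_le_of_le_one <;> norm_num
      have h7 : (0 : ℝ) < (2⁻¹ : ℝ) ^ (b + 1) := by positivity
      have h8 : (2:ℝ) ^ (a+2) = 2 ^ (a+1) * 2 := by ring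
      have h9 : (2:ℝ) ^ 1 ≤ 2 ^ (a+1) := pow_le_pow_right₀ (by norm_num) (by omega)
      norm_num at h9
      linarith
    exact hmono.injective h4
  · -- each point is a root
    intro n
    set z : B := t ^ (n + 1) with hzdef
    set z' : B := t' ^ (n + 1) with hz'def
    have hz : z * z' = 1 := by rw [hzdef, hz'def, ← mul_pow, ht, one_pow]
    have hK : t ^ 2 * t' ^ 2 = 1 := by rw [← mul_pow, ht, one_pow]
    have pe := point_eval hq hM hw hσ (t ^ 2) (t' ^ 2) z z' hK hz
    have cheb := cheb_eval z z' hz M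
    simp only [Set.mem_setOf_eq, Polynomial.IsRoot, hD, Polynomial.eval_sub,
      Polynomial.eval_prod, Polynomial.eval_add, Polynomial.eval_mul, Polynomial.eval_pow,
      Polynomial.eval_C, Polynomial.eval_X, Polynomial.eval_neg, Polynomial.eval_one,
      Polynomial.eval_map]
    rw [sub_eq_zero]
    have hQ : Polynomial.eval₂ (Int.castRingHom B) (z + z') (Qcheb M) = z ^ M + z' ^ M := by
      rw [← algebraMap_int_eq, ← Polynomial.aeval_def]
      exact cheb
    rw [hQ]
    calc ∏ j ∈ Finset.range M,
          (algebraMap ℂ B (q * (q ^ 2) ^ j) * t ^ 2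
            + algebraMap ℂ B (q⁻¹ * (q⁻¹ ^ 2) ^ j) * t' ^ 2 - (z + z'))
        = (t ^ 2) ^ M + (t' ^ 2) ^ M + (-1 : B) ^ M * (z ^ M + z' ^ M) := pe
      _ = t ^ (2 * M) + t' ^ (2 * M) + (-1 : B) ^ M * (z ^ M + z' ^ M) := by
          rw [← pow_mul, ← pow_mul]

open LaurentPolynomial in
lemma grand (q sq : ℂ) (hq : q ≠ 0) (hsq0 : sq ≠ 0) (hsq : sq ^ 2 = q)
    (M : ℕ) (hM : 0 < M)
    (hw : IsPrimitiveRoot (q ^ 2) M) (hσ : q ^ M = (-1 : ℂ) ^ (M + 1)) :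
    ∏ j ∈ Finset.range (2 * M),
      (Polynomial.C (algebraMap ℂ (LaurentPolynomial ℂ) (sq * q ^ j) * T 1
         - algebraMap ℂ (LaurentPolynomial ℂ) (sq⁻¹ * q⁻¹ ^ j) * T (-1))
        - (-1 : Polynomial (LaurentPolynomial ℂ)) ^ j * Polynomial.X)
    = Polynomial.C ((T 1 : LaurentPolynomial ℂ) ^ (2 * M) + (T (-1)) ^ (2 * M))
      + (-1 : Polynomial (LaurentPolynomial ℂ)) ^ M
        * Polynomial.aeval ((Polynomial.X : Polynomial (LaurentPolynomial ℂ)) ^ 2 + 2)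
            (Qcheb M) := by
  set B := LaurentPolynomial ℂ with hB
  set R := Polynomial B with hR
  set aB := algebraMap ℂ B with haB
  set t : B := T 1 with htdef
  set t' : B := T (-1) with ht'def
  have ht : t * t' = 1 := by rw [htdef, ht'def, ← T_add]; norm_num
  set σ : ℂ := (-1 : ℂ) ^ (M + 1) with hσdef
  have hσ2 : σ * σ = 1 := by
    rw [hσdef, ← pow_add, ← two_mul]; norm_num [pow_mul]
  have hσinv : (q⁻¹) ^ M = σ := by
    have hinv : ((-1 : ℂ))⁻¹ = -1 := by norm_num
    rw [inv_pow, hσ, hσdef, ← inv_pow, hinv]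
  -- the paired factors
  set ξ : ℕ → R := fun j => Polynomial.C (aB (sq * q ^ j) * t - aB (sq⁻¹ * q⁻¹ ^ j) * t')
      - (-1 : R) ^ j * Polynomial.X with hξ
  set r : ℕ → B := fun j => aB (q * (q ^ 2) ^ j) * t ^ 2 + aB (q⁻¹ * (q⁻¹ ^ 2) ^ j) * t' ^ 2
    with hr
  have pair : ∀ j, ξ j * ξ (M + j)
      = algebraMap ℂ R σ * (Polynomial.C (r j) - (Polynomial.X ^ 2 + 2)) := by
    intro j
    set G : B := aB (sq * q ^ j) * t - aB (sq⁻¹ * q⁻¹ ^ j) * t' with hG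
    have s1 : (sq * q ^ j) ^ 2 = q * (q ^ 2) ^ j := by
      rw [← hsq]; ring
    have s2 : (sq⁻¹ * q⁻¹ ^ j) ^ 2 = q⁻¹ * (q⁻¹ ^ 2) ^ j := by
      rw [mul_pow, inv_pow, hsq]; ring
    have s3 : (sq * q ^ j) * (sq⁻¹ * q⁻¹ ^ j) = 1 := by
      field_simp
      rw [← mul_pow, one_div, mul_inv_cancel₀ hq, one_pow]
    have hG2 : G ^ 2 = r j - 2 := by
      have expand : G ^ 2 = aB ((sq * q ^ j) ^ 2) * t ^ 2
          - aB ((sq * q ^ j) * (sq⁻¹ * q⁻¹ ^ j)) * (2 * (t * t'))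
          + aB ((sq⁻¹ * q⁻¹ ^ j) ^ 2) * t' ^ 2 := by
        simp only [hG, map_mul, map_pow]; ring
      rw [expand, s1, s2, s3, map_one, ht, hr]; ring
    have hmj1 : sq * q ^ (M + j) = σ * (sq * q ^ j) := by
      rw [pow_add, hσ]; ring
    have hmj2 : sq⁻¹ * q⁻¹ ^ (M + j) = σ * (sq⁻¹ * q⁻¹ ^ j) := by
      rw [pow_add, hσinv]; ring
    have hmj3 : (-1 : R) ^ (M + j) = -(algebraMap ℂ R σ) * (-1 : R) ^ j := by
      rw [pow_add, hσdef, map_pow, map_neg, map_one, pow_succ]; ring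
    have hξMj : ξ (M + j) = algebraMap ℂ R σ * (Polynomial.C G + (-1 : R) ^ j * Polynomial.X)
        := by
      rw [hξ]
      simp only [hmj1, hmj2, hmj3, map_mul, map_sub, map_add, hG]
      have hCσ : Polynomial.C (aB σ) = algebraMap ℂ R σ := rfl
      rw [← hCσ]
      ring
    have hε2 : ((-1 : R) ^ j) ^ 2 = 1 := by
      rw [← pow_mul, mul_comm, pow_mul]; norm_num
    have hCG2 : Polynomial.C (G ^ 2) = (Polynomial.C G) ^ 2 := by rw [map_pow]
    calc ξ j * ξ (M + j)
        = algebraMap ℂ R σ * ((Polynomial.C G) ^ 2 - ((-1 : R) ^ j) ^ 2 * Polynomial.X ^ 2)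
          := by rw [hξMj, hξ]; ring
      _ = algebraMap ℂ R σ * (Polynomial.C (G ^ 2) - Polynomial.X ^ 2) := by
          rw [hCG2, hε2]; ring
      _ = algebraMap ℂ R σ * (Polynomial.C (r j) - (Polynomial.X ^ 2 + 2)) := by
          rw [hG2, map_sub]
          have : Polynomial.C (2 : B) = (2 : R) := map_ofNat _ 2
          rw [this]; ring
  -- split and pair the product
  have split : ∏ j ∈ Finset.range (2 * M), ξ j
      = ∏ j ∈ Finset.range M, (ξ j * ξ (M + j)) := by
    rw [two_mul, Finset.prod_range_add, ← Finset.prod_mul_distrib]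
  have hσM : σ ^ M = 1 := by
    rw [hσdef, ← pow_mul]
    exact Even.neg_one_pow (by rw [mul_comm]; exact Nat.even_mul_succ_self M)
  have collect : ∏ j ∈ Finset.range M, (ξ j * ξ (M + j))
      = ∏ j ∈ Finset.range M, (Polynomial.C (r j) - (Polynomial.X ^ 2 + 2)) := by
    rw [Finset.prod_congr rfl (fun j _ => pair j), Finset.prod_mul_distrib,
      Finset.prod_const, Finset.card_range, ← map_pow, hσM, map_one, one_mul]
  -- substitute Y ↦ X^2 + 2 into the key identity
  have key := key_identity q hq M hM hw hσ
  have tr := congrArg (Polynomial.aeval ((Polynomial.X : R) ^ 2 + 2)) key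
  rw [map_prod, map_add, map_mul, map_pow, map_neg, map_one] at tr
  simp only [map_sub, Polynomial.aeval_C, Polynomial.aeval_X] at tr
  rw [← algebraMap_int_eq, Polynomial.aeval_map_algebraMap] at tr
  have halg : ∀ b : B, (algebraMap B R) b = Polynomial.C b := fun b => rfl
  rw [split, collect]
  exact tr


section
open LaurentPolynomial

/-- If `q` is a primitive `l`-th root of unity, `l > 2` not twice an odd
integer, and `L` is the smallest even multiple of `l` (so `l' = L` is even),
then in `U_q(osp(1|2))` the following relation holds in the centre:
`(-1)^{L/2} Q_{L/2}(C) = -k^L - k^{-L} + η^L f^L e^L`, with `C = S² + 2`. -/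
theorem central_relation_L_even
    {A : Type*} [Ring A] [Algebra ℂ A]
    (q sq : ℂ) (l : ℕ) (hl : 2 < l) (hprim : IsPrimitiveRoot q l)
    (hnot : ¬ ∃ m : ℕ, Odd m ∧ l = 2 * m) (hsq : sq ^ 2 = q)
    (L : ℕ) (hL : L = if Even l then l else 2 * l)
    (e f : A) (k : Aˣ)
    (rel1 : (k : A) * e = q • (e * (k : A)))
    (rel2 : (k : A) * f = q⁻¹ • (f * (k : A)))
    (rel3 : e * f + f * e = (q - q⁻¹)⁻¹ • ((k : A) - ((k⁻¹ : Aˣ) : A)))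
    (η : ℂ) (hη : η = (sq + sq⁻¹) * (q - q⁻¹))
    (S : A) (hS : S = sq • (k : A) - sq⁻¹ • ((k⁻¹ : Aˣ) : A) - η • (f * e))
    (C : A) (hC : C = S ^ 2 + 2) :
    ((-1 : ℂ) ^ (L / 2)) • Polynomial.aeval C (Qcheb (L / 2))
      = -(((k ^ L : Aˣ)) : A) - (((k⁻¹ ^ L : Aˣ)) : A) + (η ^ L) • (f ^ L * e ^ L) := by
  -- scalar basics
  have hl0 : l ≠ 0 := by omega
  have hq0 : q ≠ 0 := hprim.ne_zero hl0
  have hsq0 : sq ≠ 0 := by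
    intro h; rw [h] at hsq; exact hq0 (by rw [← hsq]; ring)
  have hq21 : q ^ 2 ≠ 1 := hprim.pow_ne_one_of_pos_of_lt (by norm_num) hl
  have hqq : q - q⁻¹ ≠ 0 := by
    intro h
    apply hq21
    have h2 : q = q⁻¹ := sub_eq_zero.mp h
    field_simp at h2
    rw [← h2]
  -- M, L facts
  obtain ⟨M, hM2, hMpos, hw, hσ⟩ :
      ∃ M : ℕ, L = 2 * M ∧ 0 < M ∧ IsPrimitiveRoot (q ^ 2) M ∧
        q ^ M = (-1 : ℂ) ^ (M + 1) := by
    by_cases hev : Even l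
    · obtain ⟨c, hc⟩ := id hev
      have hc2 : l = 2 * c := by omega
      have hcEven : Even c := by
        rcases Nat.even_or_odd c with h | h
        · exact h
        · exact absurd ⟨c, h, hc2⟩ hnot
      refine ⟨c, by rw [hL, if_pos hev, hc2], by omega, hprim.pow (by omega) hc2, ?_⟩
      have h2 : IsPrimitiveRoot (q ^ c) 2 := hprim.pow (by omega) (by omega)
      rw [h2.eq_neg_one_of_two_right]
      obtain ⟨d, hd⟩ := hcEven
      have : Odd (c + 1) := by exact ⟨d, by omega⟩
      rw [this.neg_one_pow]
    · have hodd : Odd l := Nat.not_even_iff_odd.mp hev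
      refine ⟨l, by rw [hL, if_neg hev], by omega, ?_, ?_⟩
      · exact hprim.pow_of_coprime 2 (Nat.coprime_two_left.mpr hodd)
      · rw [hprim.pow_eq_one]
        have : Even (l + 1) := by
          obtain ⟨d, hd⟩ := hodd; exact ⟨d + 1, by omega⟩
        rw [this.neg_one_pow]
  -- noncommutative setup
  set aA := algebraMap ℂ A with haA
  have hsmul : ∀ (c : ℂ) (x : A), c • x = aA c * x := fun c x => Algebra.smul_def c x
  have hcen : ∀ (c : ℂ) (x y : A), x * (aA c * y) = aA c * (x * y) := by
    intro c x y; rw [← mul_assoc, ← Algebra.commutes, mul_assoc]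
  have hkk' : (↑k : A) * ↑k⁻¹ = 1 := Units.mul_inv k
  have hk'k : (↑k⁻¹ : A) * ↑k = 1 := Units.inv_mul k
  have re1 : (↑k : A) * e = aA q * (e * ↑k) := by rw [rel1, hsmul]
  have rf1 : (↑k : A) * f = aA q⁻¹ * (f * ↑k) := by rw [rel2, hsmul]
  have h1 : e * ↑k⁻¹ = aA q * ((↑k⁻¹ : A) * e) := by
    calc e * (↑k⁻¹ : A)
        = ((↑k⁻¹ : A) * (↑k * e)) * ↑k⁻¹ := by rw [← mul_assoc, hk'k, one_mul]
      _ = ((↑k⁻¹ : A) * (aA q * (e * ↑k))) * ↑k⁻¹ := by rw [re1]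
      _ = aA q * ((↑k⁻¹ : A) * (e * (↑k * ↑k⁻¹))) := by
          simp only [mul_assoc]; rw [hcen]
      _ = aA q * ((↑k⁻¹ : A) * e) := by rw [hkk', mul_one]
  have re1' : (↑k⁻¹ : A) * e = aA q⁻¹ * (e * ↑k⁻¹) := by
    rw [h1, ← mul_assoc, ← map_mul, inv_mul_cancel₀ hq0, map_one, one_mul]
  have hkfe : (↑k : A) * (f * e) = (f * e) * ↑k := by
    calc (↑k : A) * (f * e) = ((↑k : A) * f) * e := (mul_assoc _ _ _).symm
      _ = aA q⁻¹ * (f * (↑k * e)) := by rw [rf1]; simp only [mul_assoc]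
      _ = aA q⁻¹ * (f * (aA q * (e * ↑k))) := by rw [re1]
      _ = aA q⁻¹ * (aA q * (f * (e * ↑k))) := by rw [hcen]
      _ = (f * e) * ↑k := by
          rw [← mul_assoc, ← map_mul, inv_mul_cancel₀ hq0, map_one, one_mul, ← mul_assoc]
  have kS : (↑k : A) * S = S * ↑k := by
    rw [hS]
    simp only [hsmul, mul_sub, sub_mul]
    rw [hcen, hcen, hcen, hkfe]
    simp only [mul_assoc, hkk', hk'k, mul_one]
  have ref : e * f = aA (q - q⁻¹)⁻¹ * ↑k - aA (q - q⁻¹)⁻¹ * ↑k⁻¹ - f * e := by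
    have h2 := eq_sub_of_add_eq rel3
    rw [h2, hsmul, mul_sub]
  have hSe : S * e = aA sq * (aA q * (e * ↑k)) - aA sq⁻¹ * (aA q⁻¹ * (e * ↑k⁻¹))
      - aA η * (f * (e * e)) := by
    rw [hS]
    simp only [hsmul, sub_mul, mul_assoc, re1, re1']
  have heS : e * S = aA sq * (e * ↑k) - aA sq⁻¹ * (e * ↑k⁻¹) - aA η * (e * (f * e)) := by
    rw [hS]
    simp only [hsmul, mul_sub]
    rw [hcen, hcen, hcen]
  have hefe : e * (f * e) = aA (q - q⁻¹)⁻¹ * (aA q * (e * ↑k))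
      - aA (q - q⁻¹)⁻¹ * (aA q⁻¹ * (e * ↑k⁻¹)) - f * (e * e) := by
    rw [← mul_assoc e f e, ref]
    simp only [sub_mul, mul_assoc, re1, re1']
  have eSkew : e * S = -(S * e) := by
    rw [heS, hefe, hSe]
    simp only [← hsmul]
    have hne1 : (-sq ^ 3 + sq ^ 7 : ℂ) ≠ 0 := by
      have : (-sq ^ 3 + sq ^ 7 : ℂ) = sq ^ 3 * (q ^ 2 - 1) := by rw [← hsq]; ring
      rw [this]
      exact mul_ne_zero (pow_ne_zero 3 hsq0) (sub_ne_zero.mpr hq21)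
    have hne2 : (-sq ^ 5 + sq ^ 9 : ℂ) ≠ 0 := by
      have : (-sq ^ 5 + sq ^ 9 : ℂ) = sq ^ 5 * (q ^ 2 - 1) := by rw [← hsq]; ring
      rw [this]
      exact mul_ne_zero (pow_ne_zero 5 hsq0) (sub_ne_zero.mpr hq21)
    have hne5 : (-1 + sq ^ 4 : ℂ) ≠ 0 := by
      intro h; apply hq21; rw [← hsq]; linear_combination h
    have hne6 : (-sq ^ 2 + sq ^ 6 : ℂ) ≠ 0 := by
      have : (-sq ^ 2 + sq ^ 6 : ℂ) = sq ^ 2 * (-1 + sq ^ 4) := by ring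
      rw [this]; exact mul_ne_zero (pow_ne_zero 2 hsq0) hne5
    have hμ : η * (q - q⁻¹)⁻¹ = sq + sq⁻¹ := by
      rw [hη, mul_assoc, mul_inv_cancel₀ hqq, mul_one]
    have hA : sq⁻¹ * q = sq := by rw [← hsq]; field_simp
    have hB : sq * q⁻¹ = sq⁻¹ := by rw [← hsq]; field_simp
    match_scalars
    · linear_combination (-q) * hμ - hA
    · linear_combination q⁻¹ * hμ + hB
    · ring
  have eS2 : S * e = -(e * S) := by rw [eSkew, neg_neg]
  -- the algebra homomorphisms
  set ψ : LaurentPolynomial ℂ →ₐ[ℂ] A :=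
    (AddMonoidAlgebra.lift ℂ A ℤ) ((Units.coeHom A).comp ((zpowersHom Aˣ) k)) with hψdef
  have hψT : ∀ n : ℤ, ψ (LaurentPolynomial.T n) = ↑(k ^ n) := by
    intro n
    rw [hψdef]
    show (AddMonoidAlgebra.lift ℂ A ℤ) ((Units.coeHom A).comp ((zpowersHom Aˣ) k))
      (AddMonoidAlgebra.single n 1) = ↑(k ^ n)
    rw [AddMonoidAlgebra.lift_single]
    simp [zpowersHom_apply]
  have hcommS : ∀ b : LaurentPolynomial ℂ, Commute (ψ b) S := by
    intro b
    induction b using AddMonoidAlgebra.induction_on with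
    | of g =>
        have hofg : (AddMonoidAlgebra.of ℂ ℤ (Multiplicative.ofAdd g))
            = LaurentPolynomial.T g := by
          rfl
        rw [hofg, hψT]
        exact Commute.units_zpow_left (kS : Commute (↑k : A) S) g
    | add p r hp hr => rw [map_add]; exact hp.add_left hr
    | smul c p hp => rw [map_smul]; exact hp.smul_left c
  set Φ : Polynomial (LaurentPolynomial ℂ) →ₐ[ℂ] A :=
    Polynomial.eval₂AlgHom ψ S hcommS with hΦdef
  have hΦX : Φ Polynomial.X = S := by
    rw [hΦdef]; simp [Polynomial.eval₂AlgHom_apply]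
  have hΦC : ∀ b, Φ (Polynomial.C b) = ψ b := by
    intro b; rw [hΦdef]; simp [Polynomial.eval₂AlgHom_apply]
  -- the factors
  set ξ : ℕ → Polynomial (LaurentPolynomial ℂ) := fun j =>
    Polynomial.C (algebraMap ℂ (LaurentPolynomial ℂ) (sq * q ^ j) * LaurentPolynomial.T 1
      - algebraMap ℂ (LaurentPolynomial ℂ) (sq⁻¹ * q⁻¹ ^ j) * LaurentPolynomial.T (-1))
      - (-1 : Polynomial (LaurentPolynomial ℂ)) ^ j * Polynomial.X with hξdef
  set Xa : ℕ → A := fun j => (sq * q ^ j) • (↑k : A) - (sq⁻¹ * q⁻¹ ^ j) • (↑k⁻¹ : A)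
      - ((-1 : ℂ) ^ j) • S with hXadef
  have hΦξ : ∀ j, Φ (ξ j) = Xa j := by
    intro j
    rw [hξdef, hXadef]
    simp only [map_sub, map_mul, map_pow, map_neg, map_one, hΦX, hΦC, ψ.commutes, hψT,
      zpow_one, zpow_neg_one, hsmul]
    rfl
  -- the inductive product formula
  have hX0 : η • (f * e) = Xa 0 := by
    rw [hXadef]
    simp only [pow_zero, mul_one, one_smul, hS]
    abel
  have step : ∀ j, Xa j * e = e * Xa (j + 1) := by
    intro j
    rw [hXadef]
    simp only [sub_mul, mul_sub, smul_mul_assoc, mul_smul_comm, mul_assoc]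
    have re1s : (↑k⁻¹ : A) * e = q⁻¹ • (e * ↑k⁻¹) := by rw [re1', hsmul]
    rw [rel1, re1s, eS2]
    match_scalars <;> ring
  have push : ∀ m, Xa 0 * e ^ m = e ^ m * Xa m := by
    intro m
    induction m with
    | zero => simp
    | succ m ih =>
        rw [pow_succ, ← mul_assoc, ih, mul_assoc, step, ← mul_assoc]
  have main : ∀ m : ℕ, (η ^ m) • (f ^ m * e ^ m) = Φ (∏ j ∈ Finset.range m, ξ j) := by
    intro m
    induction m with
    | zero => simp
    | succ m ih =>
        rw [Finset.prod_range_succ, map_mul, ← ih, hΦξ]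
        calc (η ^ (m+1)) • (f ^ (m+1) * e ^ (m+1))
            = η ^ m • (f ^ m * ((η • (f * e)) * e ^ m)) := by
              rw [pow_succ η, pow_succ f, pow_succ' e, mul_smul]
              simp only [smul_mul_assoc, mul_smul_comm, mul_assoc]
          _ = η ^ m • (f ^ m * (e ^ m * Xa m)) := by rw [hX0, push m]
          _ = (η ^ m • (f ^ m * e ^ m)) * Xa m := by
              simp only [smul_mul_assoc, mul_assoc]
  -- assemble everything
  have hgrand := grand q sq hq0 hsq0 hsq M hMpos hw hσ
  have mainL := main L
  rw [hM2] at mainL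
  have hprod : (∏ j ∈ Finset.range (2 * M), ξ j)
      = Polynomial.C ((LaurentPolynomial.T 1 : LaurentPolynomial ℂ) ^ (2 * M)
          + (LaurentPolynomial.T (-1)) ^ (2 * M))
        + (-1 : Polynomial (LaurentPolynomial ℂ)) ^ M
          * Polynomial.aeval ((Polynomial.X : Polynomial (LaurentPolynomial ℂ)) ^ 2 + 2)
              (Qcheb M) := by
    rw [hξdef]
    exact hgrand
  rw [hprod] at mainL
  have hΦ2 : Φ ((Polynomial.X : Polynomial (LaurentPolynomial ℂ)) ^ 2 + 2) = C := by
    rw [map_add, map_pow, hΦX, hC]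
    congr 1
    exact map_ofNat _ 2
  have hΦQ : Φ (Polynomial.aeval ((Polynomial.X : Polynomial (LaurentPolynomial ℂ)) ^ 2 + 2)
      (Qcheb M)) = Polynomial.aeval C (Qcheb M) := by
    have h : Polynomial.aeval (Φ ((Polynomial.X : Polynomial (LaurentPolynomial ℂ)) ^ 2 + 2))
        (Qcheb M) = Φ (Polynomial.aeval ((Polynomial.X : Polynomial (LaurentPolynomial ℂ)) ^ 2
          + 2) (Qcheb M)) :=
      Polynomial.aeval_algHom_apply (Φ.toRingHom.toIntAlgHom)
        ((Polynomial.X : Polynomial (LaurentPolynomial ℂ)) ^ 2 + 2) (Qcheb M)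
    rw [← h, hΦ2]
  rw [map_add, map_mul, hΦC, map_add, map_pow, map_pow, hψT, hψT, zpow_one, zpow_neg_one,
    map_pow, map_neg, map_one, hΦQ] at mainL
  have hL2 : L / 2 = M := by omega
  rw [hL2, hM2, Units.val_pow_eq_pow_val, Units.val_pow_eq_pow_val, mainL,
    hsmul (((-1 : ℂ)) ^ M), map_pow, map_neg, map_one]
  abel

end
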